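/- For a k-cycle τ = (a₁ ⋯ a_k) in Sₙ, define τ̌ = (x a₂)(x a₃)⋯(x a_k)(y a₁)(y a₂)(x a₁) in S_{n+2}. Then τ̌ · τ = (x y). -/

import Mathlib

open Equiv

lemma prodSwapFix (x z : ℕ) (L : List ℕ) (hzx : z ≠ x) (hzL : z ∉ L) :
    ((L.map (Equiv.swap x)).prod) z = z := by
  induction L with
  | nil => simp
  | cons a L ih =>
    simp only [List.map_cons, List.prod_cons, Equiv.Perm.mul_apply]
    rw [ih (fun h => hzL (List.mem_cons_of_mem _ h))]
    exact Equiv.swap_apply_of_ne_of_ne hzx (fun h => hzL (h ▸ List.mem_cons_self (a := a) (l := L)))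

lemma prodSwapHead (x c : ℕ) (L : List ℕ) (hcx : c ≠ x) (hcL : c ∉ L) :
    (((c :: L).map (Equiv.swap x)).prod) c = x := by
  simp only [List.map_cons, List.prod_cons, Equiv.Perm.mul_apply]
  rw [prodSwapFix x c L hcx hcL, Equiv.swap_apply_right]

lemma key (x y : ℕ) (hxy : x ≠ y) : ∀ (rest : List ℕ) (a b : ℕ),
    (a :: b :: rest).Nodup → x ∉ (a :: b :: rest) → y ∉ (a :: b :: rest) →
    ((b :: rest).map (Equiv.swap x)).prod * Equiv.swap y a * Equiv.swap y b *
      Equiv.swap x a * (a :: b :: rest).formPerm = Equiv.swap x y := by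
  intro rest
  induction rest with
  | nil =>
    intro a b hnd hx hy
    simp only [List.mem_cons, List.not_mem_nil, or_false, not_or] at hx hy
    obtain ⟨hxa, hxb⟩ := hx
    obtain ⟨hya, hyb⟩ := hy
    have hab : a ≠ b := by simp at hnd; tauto
    simp only [List.map_cons, List.map_nil, List.prod_cons, List.prod_nil, mul_one,
      List.formPerm_cons_cons, List.formPerm_singleton]
    ext z
    simp only [Equiv.Perm.mul_apply]
    rcases eq_or_ne z x with rfl | hzx
    · simp [Equiv.swap_apply_def, hxy, hxa, hxb, hya, hyb, hab,
        Ne.symm hxy, Ne.symm hxa, Ne.symm hxb, Ne.symm hya, Ne.symm hyb, Ne.symm hab]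
    rcases eq_or_ne z y with rfl | hzy
    · simp [Equiv.swap_apply_def, hxy, hxa, hxb, hya, hyb, hab,
        Ne.symm hxy, Ne.symm hxa, Ne.symm hxb, Ne.symm hya, Ne.symm hyb, Ne.symm hab]
    rcases eq_or_ne z a with rfl | hza
    · simp [Equiv.swap_apply_def, hxy, hxa, hxb, hya, hyb, hab,
        Ne.symm hxy, Ne.symm hxa, Ne.symm hxb, Ne.symm hya, Ne.symm hyb, Ne.symm hab]
    rcases eq_or_ne z b with rfl | hzb
    · simp [Equiv.swap_apply_def, hxy, hxa, hxb, hya, hyb, hab,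
        Ne.symm hxy, Ne.symm hxa, Ne.symm hxb, Ne.symm hya, Ne.symm hyb, Ne.symm hab]
    · simp [Equiv.swap_apply_def, hzx, hzy, hza, hzb,
        Ne.symm hzx, Ne.symm hzy, Ne.symm hza, Ne.symm hzb]
  | cons c rest' ih =>
    intro a b hnd hx hy
    simp only [List.mem_cons, not_or] at hx hy
    obtain ⟨hxa, hxb, hxc, hxr⟩ := hx
    obtain ⟨hya, hyb, hyc, hyr⟩ := hy
    have hnd' : (b :: c :: rest').Nodup := hnd.of_cons
    have hab : a ≠ b := by simp at hnd; tauto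
    have hbc : b ≠ c := by simp at hnd; tauto
    have hIH := ih b c hnd' (by simp [hxb, hxc, hxr])
      (by simp [hyb, hyc, hyr])
    rw [List.map_cons, List.prod_cons]
    set M : Equiv.Perm ℕ := ((c :: rest').map (Equiv.swap x)).prod with hM
    have hf : (b :: c :: rest').formPerm =
        (Equiv.swap x b)⁻¹ * ((Equiv.swap y c)⁻¹ * ((Equiv.swap y b)⁻¹ *
          (M⁻¹ * Equiv.swap x y))) := by
      rw [← hIH]; group
    have hMb : M b = b := by
      apply prodSwapFix
      · exact fun h => hxb h.symm
      · intro h; simp at hnd h; tauto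
    have hMc : M c = x := by
      apply prodSwapHead
      · exact fun h => hxc h.symm
      · simp at hnd'; tauto
    have hmid : Equiv.swap y a * (Equiv.swap y b * (Equiv.swap x a * (Equiv.swap a b *
        (Equiv.swap x b * (Equiv.swap y c * Equiv.swap y b))))) = Equiv.swap b c := by
      have hxa' : a ≠ x := fun h => hxa h.symm
      have hxb' : b ≠ x := fun h => hxb h.symm
      have hxc' : c ≠ x := fun h => hxc h.symm
      have hya' : a ≠ y := fun h => hya h.symm
      have hyb' : b ≠ y := fun h => hyb h.symm
      have hyc' : c ≠ y := fun h => hyc h.symm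
      have hac : a ≠ c := by simp at hnd; tauto
      ext z
      simp only [Equiv.Perm.mul_apply]
      rcases eq_or_ne z x with rfl | hzx
      · simp [Equiv.swap_apply_def, hxy, hxa', hxb', hxc', hya', hyb', hyc', hab, hac, hbc,
          Ne.symm hxy, hxa, hxb, hxc, hya, hyb, hyc, Ne.symm hab, Ne.symm hac, Ne.symm hbc]
      rcases eq_or_ne z y with rfl | hzy
      · simp [Equiv.swap_apply_def, hxy, hxa', hxb', hxc', hya', hyb', hyc', hab, hac, hbc,
          Ne.symm hxy, hxa, hxb, hxc, hya, hyb, hyc, Ne.symm hab, Ne.symm hac, Ne.symm hbc]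
      rcases eq_or_ne z a with rfl | hza
      · simp [Equiv.swap_apply_def, hxy, hxa', hxb', hxc', hya', hyb', hyc', hab, hac, hbc,
          Ne.symm hxy, hxa, hxb, hxc, hya, hyb, hyc, Ne.symm hab, Ne.symm hac, Ne.symm hbc]
      rcases eq_or_ne z b with rfl | hzb
      · simp [Equiv.swap_apply_def, hxy, hxa', hxb', hxc', hya', hyb', hyc', hab, hac, hbc,
          Ne.symm hxy, hxa, hxb, hxc, hya, hyb, hyc, Ne.symm hab, Ne.symm hac, Ne.symm hbc]
      rcases eq_or_ne z c with rfl | hzc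
      · simp [Equiv.swap_apply_def, hxy, hxa', hxb', hxc', hya', hyb', hyc', hab, hac, hbc,
          Ne.symm hxy, hxa, hxb, hxc, hya, hyb, hyc, Ne.symm hab, Ne.symm hac, Ne.symm hbc]
      · simp [Equiv.swap_apply_def, hzx, hzy, hza, hzb, hzc,
          Ne.symm hzx, Ne.symm hzy, Ne.symm hza, Ne.symm hzb, Ne.symm hzc]
    have hconj : M * Equiv.swap b c * M⁻¹ = Equiv.swap x b := by
      rw [← Equiv.swap_apply_apply, hMb, hMc, Equiv.swap_comm]
    have hgoal : Equiv.swap x b * M * Equiv.swap y a * Equiv.swap y b * Equiv.swap x a *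
        (Equiv.swap a b * (Equiv.swap x b * (Equiv.swap y c * (Equiv.swap y b *
          (M⁻¹ * Equiv.swap x y))))) = Equiv.swap x b * (M * Equiv.swap b c * M⁻¹) *
          Equiv.swap x y := by
      rw [← hmid]; group
    rw [List.formPerm_cons_cons a b, hf]
    simp only [Equiv.swap_inv]
    rw [hgoal, hconj, Equiv.swap_mul_self, one_mul]

theorem stmt2 (n k : ℕ) (hk : 2 ≤ k) (l : List ℕ) (hlen : l.length = k)
    (hnd : l.Nodup) (hmem : ∀ a ∈ l, 1 ≤ a ∧ a ≤ n)
    (a₁ a₂ : ℕ) (rest : List ℕ) (hl : l = a₁ :: a₂ :: rest) :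
    (((a₂ :: rest).map (Equiv.swap (n+1))).prod *
        Equiv.swap (n+2) a₁ * Equiv.swap (n+2) a₂ * Equiv.swap (n+1) a₁) *
      l.formPerm = Equiv.swap (n+1) (n+2) := by
  subst hl
  refine key (n+1) (n+2) (by omega) rest a₁ a₂ hnd ?_ ?_
  · intro h; have := hmem _ h; omega
  · intro h; have := hmem _ h; omega
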